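/- Suppose r_1 \ge ... \ge r_n is an arithmetical structure on K_n with r_1 = p a prime \ge 3, and set S = r_1 + ... + r_n, b = S/p, and m the number of indices with r_i = p. If b = m + 1, then p \le nb - b^2 + 1, and consequently p \le n^2/4 + 1. -/

import Mathlib

/-- An arithmetical structure on `K n`. -/
def IsArithStruct (n : ℕ) (r : Fin n → ℕ) : Prop :=
  (∀ i, 0 < r i) ∧ Finset.univ.gcd r = 1 ∧ ∀ j, r j ∣ ∑ i, r i

lemma two_mul_le_of_dvd {d b : ℕ} (hb : 0 < b) (hd : d ∣ b) (hne : d ≠ b) :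
    2 * d ≤ b := by
  obtain ⟨c, rfl⟩ := hd
  have hc0 : c ≠ 0 := by rintro rfl; simp at hb
  have hc1 : c ≠ 1 := by rintro rfl; simp at hne
  have h2 : 2 ≤ c := by omega
  calc 2 * d = d * 2 := by ring
    _ ≤ d * c := Nat.mul_le_mul_left d h2

theorem stmt_14 (n p : ℕ) (hn : 0 < n) (r : Fin n → ℕ)
    (h : IsArithStruct n r) (hanti : Antitone r)
    (hp : Nat.Prime p) (hp3 : 3 ≤ p) (hr1 : r ⟨0, hn⟩ = p)
    (hb : (∑ i, r i) / p = (Finset.univ.filter (fun i => r i = p)).card + 1) :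
    (p : ℤ) ≤ (n : ℤ) * ((∑ i, r i) / p : ℕ) - ((∑ i, r i) / p : ℕ) ^ 2 + 1 ∧
    (p : ℚ) ≤ (n : ℚ) ^ 2 / 4 + 1 := by
  obtain ⟨hpos, hgcd, hdvd⟩ := h
  set S := ∑ i, r i with hSdef
  set M := Finset.univ.filter (fun i => r i = p) with hMdef
  set m := M.card with hmdef
  set b := S / p with hbdef
  -- basic facts
  have hpS : p ∣ S := hr1 ▸ hdvd ⟨0, hn⟩
  have hSe : S = p * b := (Nat.mul_div_cancel' hpS).symm
  have hm1 : 1 ≤ m := Finset.card_pos.mpr ⟨⟨0, hn⟩, by simp [hMdef, hr1]⟩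
  have hb2 : 2 ≤ b := by omega
  set A := Finset.univ.filter (fun i => ¬ r i = p) with hAdef
  set k := A.card with hkdef
  have hmemA : ∀ i ∈ A, r i ≠ p := by
    intro i hi
    simpa [hAdef] using (Finset.mem_filter.mp hi).2
  have hsplit : ∑ i ∈ M, r i + ∑ i ∈ A, r i = S :=
    Finset.sum_filter_add_sum_filter_not _ _ _
  have hMsum : ∑ i ∈ M, r i = m * p := by
    rw [Finset.sum_congr rfl (fun i hi => by
      simpa [hMdef] using (Finset.mem_filter.mp hi).2)]
    simp [mul_comm, hmdef]
  have hT : ∑ i ∈ A, r i = p := by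
    have h1 := hsplit
    rw [hMsum, hSe, hb] at h1
    have h2 : p * (m + 1) = m * p + p := by ring
    rw [h2] at h1
    exact Nat.add_left_cancel h1
  -- entries of A divide b and are less than p
  have hltp : ∀ i ∈ A, r i < p := by
    intro i hi
    have hle : r i ≤ p := hr1 ▸ hanti (show (⟨0, hn⟩ : Fin n) ≤ i by simp [Fin.le_def])
    exact lt_of_le_of_ne hle (hmemA i hi)
  have hdvdb : ∀ i ∈ A, r i ∣ b := by
    intro i hi
    have hcop : Nat.Coprime p (r i) :=
      (Nat.Prime.coprime_iff_not_dvd hp).mpr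
        (fun hd => absurd (Nat.le_of_dvd (hpos i) hd) (not_le.mpr (hltp i hi)))
    have : r i ∣ p * b := hSe ▸ hdvd i
    exact (Nat.Coprime.dvd_of_dvd_mul_left hcop.symm) this
  have hleb : ∀ i ∈ A, r i ≤ b := fun i hi => Nat.le_of_dvd (by omega) (hdvdb i hi)
  have hk1 : 1 ≤ k := by
    rcases Finset.eq_empty_or_nonempty A with hE | hNE
    · rw [hE] at hT; simp at hT; omega
    · exact Finset.card_pos.mpr hNE
  -- main bound : p + b ≤ k * b + 1
  have hmain : p + b ≤ k * b + 1 := by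
    by_contra hcon
    push_neg at hcon
    have hcon' : k * b + 2 ≤ p + b := hcon
    set A' := A.filter (fun i => ¬ r i = b) with hA'def
    have hA'sub : A' ⊆ A := Finset.filter_subset _ _
    rcases Nat.lt_or_ge A'.card 2 with hsmall | hbig
    · interval_cases hc : A'.card
      · -- all entries equal b
        have hall : ∀ i ∈ A, r i = b := by
          intro i hi
          by_contra hne
          have : i ∈ A' := Finset.mem_filter.mpr ⟨hi, by simpa using hne⟩
          rw [Finset.card_eq_zero] at hc
          simp [hc] at this
        have hTk : ∑ i ∈ A, r i = k * b := by
          rw [Finset.sum_congr rfl hall]; simp [mul_comm, hkdef]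
        have hbp : b ∣ p := Dvd.intro k (by rw [← hT, hTk]; ring)
        have hbep : b = p := by
          rcases (Nat.Prime.eq_one_or_self_of_dvd hp b hbp) with h1 | h1 <;> omega
        obtain ⟨i, hi⟩ := Finset.card_pos.mp (by omega : 0 < A.card)
        exact hmemA i hi (by rw [hall i hi, hbep])
      · -- exactly one entry less than b
        obtain ⟨j, hj⟩ := Finset.card_eq_one.mp hc
        have hjA' : j ∈ A' := by rw [hj]; simp
        have hjA : j ∈ A := hA'sub hjA'
        have hjb : r j ≠ b := by
          have := (Finset.mem_filter.mp hjA').2; simpa using this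
        have hrest : ∀ i ∈ A.erase j, r i = b := by
          intro i hi
          obtain ⟨hne, hiA⟩ := Finset.mem_erase.mp hi
          by_contra hne'
          have : i ∈ A' := Finset.mem_filter.mpr ⟨hiA, by simpa using hne'⟩
          rw [hj, Finset.mem_singleton] at this
          exact hne this
        have hsum : r j + ∑ i ∈ A.erase j, r i = p := by rw [Finset.add_sum_erase A r hjA, hT]
        have hsum2 : ∑ i ∈ A.erase j, r i = (k - 1) * b := by
          rw [Finset.sum_congr rfl hrest]
          simp [Finset.card_erase_of_mem hjA, mul_comm, hkdef]
        have hkb : (k - 1) * b + b = k * b := by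
          have : k - 1 + 1 = k := by omega
          calc (k - 1) * b + b = (k - 1 + 1) * b := by ring
            _ = k * b := by rw [this]
        have hrj2 : 2 ≤ r j := by omega
        have hrjp : r j ∣ p := by
          have h1 : r j ∣ (k - 1) * b := Dvd.dvd.mul_left (hdvdb j hjA) _
          have h2 : p = (k - 1) * b + r j := by omega
          rw [h2]; exact Nat.dvd_add h1 dvd_rfl
        have : r j = p := by
          rcases (Nat.Prime.eq_one_or_self_of_dvd hp _ hrjp) with h1 | h1 <;> omega
        exact hmemA j hjA this
    · -- two entries less than b : impossible
      obtain ⟨j, hj, j', hj', hjj'⟩ := Finset.one_lt_card.mp hbig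
      have hjA : j ∈ A := hA'sub hj
      have hj'A : j' ∈ A := hA'sub hj'
      have hjb : 2 * r j ≤ b :=
        two_mul_le_of_dvd (by omega) (hdvdb j hjA) (by simpa using (Finset.mem_filter.mp hj).2)
      have hj'b : 2 * r j' ≤ b :=
        two_mul_le_of_dvd (by omega) (hdvdb j' hj'A) (by simpa using (Finset.mem_filter.mp hj').2)
      have hj'e : j' ∈ A.erase j := Finset.mem_erase.mpr ⟨hjj'.symm, hj'A⟩
      have hs1 : r j + ∑ i ∈ A.erase j, r i = p := by rw [Finset.add_sum_erase A r hjA, hT]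
      have hs2 : r j' + ∑ i ∈ (A.erase j).erase j', r i = ∑ i ∈ A.erase j, r i := by
        rw [Finset.add_sum_erase _ r hj'e]
      have hk2 : 2 ≤ k := le_trans hbig (Finset.card_le_card hA'sub)
      have hcard : ((A.erase j).erase j').card = k - 2 := by
        rw [Finset.card_erase_of_mem hj'e, Finset.card_erase_of_mem hjA]; omega
      have hs3 : ∑ i ∈ (A.erase j).erase j', r i ≤ (k - 2) * b := by
        rw [← hcard]
        apply Finset.sum_le_card_nsmul
        intro i hi
        exact hleb i (Finset.mem_of_mem_erase (Finset.mem_of_mem_erase hi))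
      have hkb : (k - 2) * b + b + b = k * b := by
        have h5 : k - 2 + 1 + 1 = k := by omega
        calc (k - 2) * b + b + b = (k - 2 + 1 + 1) * b := by ring
          _ = k * b := by rw [h5]
      -- 2p ≤ 2(k-2)b + 2b + ... contradiction
      omega
  -- conclude
  have hcount : m + k = n := by
    have := Finset.card_filter_add_card_filter_not (s := Finset.univ)
      (p := fun i => r i = p)
    simpa [hMdef, hAdef, hmdef, hkdef] using this
  have hgoal1 : (p : ℤ) ≤ (n : ℤ) * b - (b : ℤ) ^ 2 + 1 := by
    have h1 : (p : ℤ) + b ≤ k * b + 1 := by exact_mod_cast hmain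
    have h2 : (n : ℤ) * b - (b : ℤ) ^ 2 + 1 = (k : ℤ) * b + 1 - b := by
      have hn' : (n : ℤ) = m + k := by exact_mod_cast hcount.symm
      have hb' : (b : ℤ) = m + 1 := by exact_mod_cast hb
      rw [hn', hb']; ring
    omega
  refine ⟨hgoal1, ?_⟩
  have hq : (p : ℚ) ≤ (n : ℚ) * b - (b : ℚ) ^ 2 + 1 := by exact_mod_cast hgoal1
  nlinarith [sq_nonneg ((n : ℚ) - 2 * b)]
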